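/- For all n ≥ 1, α_n(−1, 1) = 2^{n−1}, where α_n(t,q) = Σ_{segmented permutations π of size n} t^{des(π)} q^{seg(π)}. -/

import Mathlib

open Finset

/-- A segmented permutation of size `n`: a permutation of `Fin n` together with a
set of barred gaps among the `n-1` gaps between consecutive positions. -/
abbrev SegPerm (n : ℕ) := Equiv.Perm (Fin n) × Finset (Fin (n - 1))

/-- The left endpoint of gap `i`, as an element of `Fin n`. -/
def gapL {n : ℕ} (i : Fin (n - 1)) : Fin n := ⟨i.1, by have := i.2; omega⟩

/-- The right endpoint of gap `i`, as an element of `Fin n`. -/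
def gapR {n : ℕ} (i : Fin (n - 1)) : Fin n := ⟨i.1 + 1, by have := i.2; omega⟩

/-- Number of descents of a segmented permutation: gaps that are not barred and
where the value decreases. -/
def desNum {n : ℕ} (π : SegPerm n) : ℕ :=
  (univ.filter (fun i : Fin (n - 1) => i ∉ π.2 ∧ π.1 (gapR i) < π.1 (gapL i))).card

/-- Number of bars of a segmented permutation. -/
def segNum {n : ℕ} (π : SegPerm n) : ℕ := π.2.card

/-- Number of descents of an ordinary permutation. -/
def permDes {n : ℕ} (σ : Equiv.Perm (Fin n)) : ℕ :=
  (univ.filter (fun i : Fin (n - 1) => σ (gapR i) < σ (gapL i))).card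

/-- The Eulerian number `A(n,k)`. -/
def eulerian (n k : ℕ) : ℕ :=
  ((univ : Finset (Equiv.Perm (Fin n))).filter (fun σ => permDes σ = k)).card

/-- `K(n,i,j)`: number of segmented permutations of size `n` with `i` descents
and `j` bars. -/
def Knum (n i j : ℕ) : ℕ :=
  ((univ : Finset (SegPerm n)).filter (fun π => desNum π = i ∧ segNum π = j)).card

/-- `K(n,i,j)` with integer indices; it vanishes for negative indices. -/
def Kint (n : ℕ) (i j : ℤ) : ℤ :=
  (((univ : Finset (SegPerm n)).filter
      (fun π => (desNum π : ℤ) = i ∧ (segNum π : ℤ) = j)).card : ℤ)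

/-- `T(n,k)`: number of segmented permutations of size `n` with `k` descents. -/
def Tnum (n k : ℕ) : ℕ :=
  ((univ : Finset (SegPerm n)).filter (fun π => desNum π = k)).card

/-- `T(n,k)` with an integer index; it vanishes for negative indices. -/
def Tint (n : ℕ) (k : ℤ) : ℤ :=
  (((univ : Finset (SegPerm n)).filter (fun π => (desNum π : ℤ) = k)).card : ℤ)

/-- Stirling numbers of the second kind. -/
def stirling : ℕ → ℕ → ℕ
  | 0, 0 => 1
  | 0, _ + 1 => 0
  | _ + 1, 0 => 0
  | n + 1, k + 1 => (k + 1) * stirling n (k + 1) + stirling n k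

/-- The generalized Eulerian polynomial `α_n(t,q)`, as a function of real arguments. -/
noncomputable def alphaF (n : ℕ) (t q : ℝ) : ℝ :=
  ∑ π : SegPerm n, t ^ desNum π * q ^ segNum π

theorem alphaF_neg_one_one (n : ℕ) (hn : 1 ≤ n) :
    alphaF n (-1) 1 = 2 ^ (n - 1) := by
  classical
  obtain ⟨m, rfl⟩ : ∃ m, n = m + 1 := ⟨n - 1, by omega⟩
  have hm : m + 1 - 1 = m := rfl
  -- inner sum over barred sets
  have key : ∀ σ : Equiv.Perm (Fin (m + 1)),
      ∑ S : Finset (Fin m), ((-1 : ℝ)) ^ desNum (n := m + 1) (σ, S)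
        = if ∀ i : Fin m, σ (gapL i) < σ (gapR i) then (2 : ℝ) ^ m else 0 := by
    intro σ
    have h1 : ∀ S : Finset (Fin m), ((-1 : ℝ)) ^ desNum (n := m + 1) (σ, S)
        = ∏ i ∈ (univ : Finset (Fin m)) \ S,
            (if σ (gapR i) < σ (gapL i) then (-1 : ℝ) else 1) := by
      intro S
      rw [Finset.prod_ite, Finset.prod_const, Finset.prod_const, one_pow, mul_one, desNum]
      congr 2
      ext i
      simp [Finset.mem_sdiff, Finset.mem_filter, and_comm]
    simp only [h1]
    have h2 : ∑ S : Finset (Fin m), ∏ i ∈ (univ : Finset (Fin m)) \ S,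
          (if σ (gapR i) < σ (gapL i) then (-1 : ℝ) else 1)
        = ∏ i : Fin m, ((1 : ℝ) + if σ (gapR i) < σ (gapL i) then (-1 : ℝ) else 1) := by
      rw [Finset.prod_add]
      rw [← Finset.powerset_univ]
      exact (Finset.sum_congr rfl (fun S _ => by rw [Finset.prod_const_one, one_mul])).symm
    rw [h2]
    by_cases h : ∀ i : Fin m, σ (gapL i) < σ (gapR i)
    · rw [if_pos h]
      have : ∀ i : Fin m, ((1 : ℝ) + if σ (gapR i) < σ (gapL i) then (-1 : ℝ) else 1) = 2 := by
        intro i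
        rw [if_neg (not_lt.mpr (le_of_lt (h i)))]
        norm_num
      rw [Finset.prod_congr rfl (fun i _ => this i), Finset.prod_const, Finset.card_univ,
        Fintype.card_fin]
    · rw [if_neg h]
      push_neg at h
      obtain ⟨i, hi⟩ := h
      have hne : σ (gapL i) ≠ σ (gapR i) := by
        intro hEq
        have h2 := congrArg Fin.val (σ.injective hEq)
        simp [gapL, gapR] at h2
      have hlt : σ (gapR i) < σ (gapL i) := lt_of_le_of_ne hi (fun hEq => hne hEq.symm)
      refine Finset.prod_eq_zero (Finset.mem_univ i) ?_
      rw [if_pos hlt]; norm_num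
  -- the permutation with no descents is unique
  have huniq : (univ.filter
      (fun σ : Equiv.Perm (Fin (m + 1)) => ∀ i : Fin m, σ (gapL i) < σ (gapR i))) = {1} := by
    ext σ
    simp only [Finset.mem_filter, Finset.mem_univ, true_and, Finset.mem_singleton]
    constructor
    · intro h
      have hsm : StrictMono σ := by
        rw [Fin.strictMono_iff_lt_succ]
        intro i
        exact h i
      have hid : StrictMono (id : Fin (m + 1) → Fin (m + 1)) := strictMono_id
      have hrange : Set.range σ = Set.range (id : Fin (m + 1) → Fin (m + 1)) := by
        simp [Set.range_eq_univ.mpr σ.surjective]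
      haveI inst : WellFoundedLT (Fin (m + 1)) := inferInstance
      have : (σ : Fin (m + 1) → Fin (m + 1)) = id :=
        (@StrictMono.range_inj (Fin (m + 1)) (Fin (m + 1)) _ _ inst _ _ hsm hid).mp hrange
      ext x
      exact congrArg Fin.val (congrFun this x)
    · rintro rfl
      intro i
      exact Fin.castSucc_lt_succ (i := i)
  -- put it together
  unfold alphaF
  simp only [one_pow, mul_one]
  rw [Fintype.sum_prod_type]
  calc (∑ σ : Equiv.Perm (Fin (m + 1)), ∑ S : Finset (Fin (m + 1 - 1)),
        ((-1 : ℝ)) ^ desNum (σ, S))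
      = ∑ σ : Equiv.Perm (Fin (m + 1)),
          (if ∀ i : Fin m, σ (gapL i) < σ (gapR i) then (2 : ℝ) ^ m else 0) :=
        Finset.sum_congr rfl (fun σ _ => key σ)
    _ = ∑ σ ∈ univ.filter
          (fun σ : Equiv.Perm (Fin (m + 1)) => ∀ i : Fin m, σ (gapL i) < σ (gapR i)),
          (2 : ℝ) ^ m := (Finset.sum_filter _ _).symm
    _ = (2 : ℝ) ^ m := by rw [huniq, Finset.sum_singleton]
    _ = 2 ^ (m + 1 - 1) := rfl
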